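/- In the worker-proposing Deferred Acceptance algorithm run on a single instance A, if firm f ever rejects worker w during the execution, then w and f are not matched in any stable matching of A. -/
import Mathlib


/-- A stable matching instance: each worker `w` ranks firms via `wr w` (lower rank =
more preferred, rank = position in the preference list) and each firm `f` ranks
workers via `fr f`. -/
structure SMInstance (W F : Type) where
  wr : W → F → ℕ
  fr : F → W → ℕ
  wr_inj : ∀ w, Function.Injective (wr w)
  fr_inj : ∀ f, Function.Injective (fr f)

variable {W F : Type}

/-- `(w, f)` is a blocking pair for the matching `M` under instance `A`. -/
def SMInstance.Blocking (A : SMInstance W F) (M : W ≃ F) (w : W) (f : F) : Prop :=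
  M w ≠ f ∧ A.wr w f < A.wr w (M w) ∧ A.fr f w < A.fr f (M.symm f)

/-- `M` is stable under `A`: it has no blocking pair. -/
def SMInstance.Stable (A : SMInstance W F) (M : W ≃ F) : Prop :=
  ∀ w f, ¬ A.Blocking M w f

/-- Pointwise "less preferred partner" (join) of two matchings, w.r.t. the worker
preferences of `A`. -/
def worse (A : SMInstance W F) (M1 M2 : W ≃ F) (w : W) : F :=
  if A.wr w (M1 w) ≤ A.wr w (M2 w) then M2 w else M1 w

/-- Pointwise "more preferred partner" (meet) of two matchings, w.r.t. the worker
preferences of `A`. -/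
def better (A : SMInstance W F) (M1 M2 : W ≃ F) (w : W) : F :=
  if A.wr w (M1 w) ≤ A.wr w (M2 w) then M1 w else M2 w

/-- In the (round-based) worker-proposing Deferred Acceptance algorithm on instance
`A` — modelled by any execution trace where `crossed t w` is the set of firms `w`
has crossed off before round `t`, and `prop t w` is the firm `w` proposes to in
round `t` (its most preferred uncrossed firm), with a firm rejecting a proposer
exactly when it receives a proposal from a strictly better worker — if `f` ever
rejects `w` (i.e. `f ∈ crossed t w` for some `t`), then `w` and `f` are not matched
in any stable matching of `A`. -/
theorem stmt15 (A : SMInstance W F)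
    (crossed : ℕ → W → Set F) (prop : ℕ → W → F)
    (h0 : ∀ w, crossed 0 w = ∅)
    (hbest : ∀ t w, prop t w ∉ crossed t w ∧
      ∀ f, f ∉ crossed t w → A.wr w (prop t w) ≤ A.wr w f)
    (hstep : ∀ t w, crossed (t + 1) w = crossed t w ∪
      {f | prop t w = f ∧ ∃ w', prop t w' = f ∧ A.fr f w' < A.fr f w}) :
    ∀ t w f, f ∈ crossed t w → ∀ M : W ≃ F, A.Stable M → M w ≠ f := by
  intro t
  induction t with
  | zero => intro w f hf; rw [h0] at hf; exact absurd hf (Set.notMem_empty f)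
  | succ t ih =>
    intro w f hf M hM hMw
    rw [hstep] at hf
    rcases hf with hf | ⟨hp, w', hp', hlt⟩
    · exact ih w f hf M hM hMw
    · -- w' proposed to f; show (w', f) blocks M
      have hw'ne : M w' ≠ f := by
        intro h
        have : w' = w := M.injective (h.trans hMw.symm)
        subst this
        exact lt_irrefl _ hlt
      have hMnc : M w' ∉ crossed t w' := fun hc => ih w' (M w') hc M hM rfl
      have hle : A.wr w' f ≤ A.wr w' (M w') := hp' ▸ (hbest t w').2 _ hMnc
      have hlt' : A.wr w' f < A.wr w' (M w') :=
        lt_of_le_of_ne hle (fun h => hw'ne (A.wr_inj w' h).symm)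
      have hsf : M.symm f = w := by rw [← hMw, Equiv.symm_apply_apply]
      exact hM w' f ⟨hw'ne, hlt', by rw [hsf]; exact hlt⟩
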